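/- arXiv:1209.3849 — 2 statements merged into one kernel-verified Lean document; each statement's English description precedes it below -/
import Mathlib

section
/- Let k > 100 and n > 100·k². Choose a partition Π of Fin n into 100·k² classes uniformly at random, i.e., Π : Fin n → Fin (100·k²) is chosen uniformly among all functions. For a subset J ⊆ Fin n, let N(Π, J) denote the number of classes c ∈ Fin (100·k²) such that |{j ∈ J : Π(j) = c}| is odd. Then for every J ⊆ Fin n with |J| > k, the probability that N(Π, J) > k is greater than 9/10. -/
open Finset

private lemma sum_prod_fn {n m : ℕ} (g : Fin n → Fin m → ℝ) :
    ∑ f : Fin n → Fin m, ∏ i, g i (f i) = ∏ i, ∑ x, g i x :=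
  (Fintype.prod_sum _).symm

private lemma exp_prod {n m : ℕ} (J : Finset (Fin n)) (ε : Fin m → ℝ) :
    ∑ f : Fin n → Fin m, ∏ j ∈ J, ε (f j)
      = (∑ x, ε x) ^ J.card * (m : ℝ) ^ (n - J.card) := by
  have h1 : ∀ f : Fin n → Fin m, ∏ j ∈ J, ε (f j)
      = ∏ j, (if j ∈ J then ε (f j) else 1) := by
    intro f
    rw [Finset.prod_ite_mem, Finset.univ_inter]
  simp_rw [h1]
  rw [sum_prod_fn (fun j x => if j ∈ J then ε x else 1)]
  have h2 : ∀ j : Fin n, (∑ x : Fin m, if j ∈ J then ε x else (1:ℝ))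
      = if j ∈ J then ∑ x, ε x else (m:ℝ) := by
    intro j; split <;> simp
  simp_rw [h2]
  rw [Finset.prod_ite, Finset.prod_const, Finset.prod_const]
  have h3 : univ.filter (fun j => j ∈ J) = J := by ext j; simp
  have h4 : (univ.filter (fun j => j ∉ J)).card = n - J.card := by
    have := Finset.card_filter_add_card_filter_not (s := (univ : Finset (Fin n)))
      (p := fun j => j ∈ J)
    rw [h3] at this
    have h5 : (univ : Finset (Fin n)).card = n := by simp
    omega
  rw [h3, h4]

private lemma exp_coll {n m : ℕ} (hn : 2 ≤ n) (i j : Fin n) (hij : i ≠ j) :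
    ∑ f : Fin n → Fin m, (if f i = f j then (1:ℝ) else 0) = (m:ℝ) ^ (n - 1) := by
  have key : ∀ f : Fin n → Fin m, (if f i = f j then (1:ℝ) else 0)
      = ∑ c : Fin m, ∏ l ∈ ({i, j} : Finset (Fin n)), (if f l = c then (1:ℝ) else 0) := by
    intro f
    simp_rw [Finset.prod_pair hij]
    by_cases hfij : f i = f j
    · rw [if_pos hfij, hfij]
      simp
    · rw [if_neg hfij]
      rw [eq_comm (a := (0:ℝ))]
      apply Finset.sum_eq_zero
      intro c _
      by_cases h1 : f i = c
      · have : ¬ f j = c := fun h => hfij (h1.trans h.symm)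
        simp [this]
      · simp [h1]
  simp_rw [key]
  rw [Finset.sum_comm]
  have hcard : ({i, j} : Finset (Fin n)).card = 2 := Finset.card_pair hij
  have : ∀ c : Fin m, ∑ f : Fin n → Fin m, ∏ l ∈ ({i, j} : Finset (Fin n)),
      (if f l = c then (1:ℝ) else 0) = (m:ℝ) ^ (n - 2) := by
    intro c
    rw [exp_prod ({i, j} : Finset (Fin n)) (fun x => if x = c then (1:ℝ) else 0), hcard]
    simp
  simp_rw [this]
  rw [Finset.sum_const, Finset.card_univ, Fintype.card_fin, nsmul_eq_mul]
  rw [show n - 1 = (n - 2) + 1 by omega, pow_succ]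
  ring

set_option maxHeartbeats 2000000 in
/-- For a uniformly random partition `π : Fin n → Fin (100 k²)` and any `J` with `|J| > k`,
the probability that the number of classes containing an odd number of elements of `J`
exceeds `k` is greater than `9/10`. -/
theorem random_partition_large (n k : ℕ) (hk : 100 < k) (hn : 100 * k ^ 2 < n)
    (J : Finset (Fin n)) (hJ : k < J.card) :
    (9 / 10 : ℝ) <
      ((univ.filter fun π : Fin n → Fin (100 * k ^ 2) =>
          k < (univ.filter fun c : Fin (100 * k ^ 2) =>
            Odd (J.filter fun j => π j = c).card).card).card : ℝ) /
        (Fintype.card (Fin n → Fin (100 * k ^ 2)) : ℝ) := by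
  set m := 100 * k ^ 2 with hm
  set N : (Fin n → Fin m) → ℕ := fun π =>
    (univ.filter fun c : Fin m => Odd ((J.filter fun j => π j = c)).card).card with hN
  set good : Finset (Fin n → Fin m) := univ.filter (fun π => k < N π) with hgood
  set bad : Finset (Fin n → Fin m) := univ.filter (fun π => ¬ k < N π) with hbad
  have hTcard : (Fintype.card (Fin n → Fin m)) = m ^ n := by
    simp [Fintype.card_fun]
  have hmpos : 0 < m := by positivity
  have hTpos : (0:ℝ) < (m:ℝ) ^ n := by positivity
  have h100 : 100 ≤ m := by
    rw [hm]
    calc 100 = 100 * 1 := by norm_num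
    _ ≤ 100 * k ^ 2 := Nat.mul_le_mul_left 100 (Nat.one_le_pow _ _ (by omega))
  have hn2 : 2 ≤ n := by omega
  have key : (bad.card : ℝ) * 10 < (m:ℝ) ^ n := by
    by_cases hcase : J.card ≤ 51 * k
    · -- Case A: small J, first-moment (collision) argument
      set C : (Fin n → Fin m) → ℝ :=
        fun f => ∑ i ∈ J, ∑ j ∈ J.erase i, (if f i = f j then (1:ℝ) else 0) with hC
      have hCnonneg : ∀ f, 0 ≤ C f := by
        intro f; apply Finset.sum_nonneg; intro i _; apply Finset.sum_nonneg; intro j _; positivity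
      have hstep1 : ∀ f ∈ bad, (J.card:ℝ) - k ≤ C f := by
        intro f hf
        have hfN : N f ≤ k := by
          have := (Finset.mem_filter.mp (hbad ▸ hf)).2
          omega
        set A := J.filter (fun i => ∃ j ∈ J.erase i, f j = f i) with hA
        have hAsub : A ⊆ J := Finset.filter_subset _ _
        have hCA : (A.card : ℝ) ≤ C f := by
          have h1 : ∀ i ∈ A, (1:ℝ) ≤ ∑ j ∈ J.erase i, (if f i = f j then (1:ℝ) else 0) := by
            intro i hi
            obtain ⟨-, j, hj, hfj⟩ := Finset.mem_filter.mp hi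
            calc (1:ℝ) = (if f i = f j then (1:ℝ) else 0) := by rw [if_pos hfj.symm]
            _ ≤ ∑ j' ∈ J.erase i, (if f i = f j' then (1:ℝ) else 0) :=
              Finset.single_le_sum (f := fun j' => if f i = f j' then (1:ℝ) else 0)
                (fun j' _ => by positivity) hj
          calc (A.card : ℝ) = ∑ _i ∈ A, (1:ℝ) := by simp
          _ ≤ ∑ i ∈ A, ∑ j ∈ J.erase i, (if f i = f j then (1:ℝ) else 0) := Finset.sum_le_sum h1
          _ ≤ C f := Finset.sum_le_sum_of_subset_of_nonneg hAsub
              (fun i _ _ => Finset.sum_nonneg (fun j _ => by positivity))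
        have hNA : (J \ A).card ≤ N f := by
          simp only [hN]
          apply Finset.card_le_card_of_injOn (fun j => f j)
          · intro j hj
            obtain ⟨hjJ, hjA⟩ := Finset.mem_sdiff.mp hj
            have hsingle : J.filter (fun j' => f j' = f j) = {j} := by
              ext j'
              simp only [Finset.mem_filter, Finset.mem_singleton]
              constructor
              · rintro ⟨hj'J, hfj'⟩
                by_contra hne
                exact hjA (Finset.mem_filter.mpr
                  ⟨hjJ, ⟨j', Finset.mem_erase.mpr ⟨hne, hj'J⟩, hfj'⟩⟩)
              · rintro rfl; exact ⟨hjJ, rfl⟩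
            simp only [Finset.mem_coe, Finset.mem_filter, Finset.mem_univ, true_and]
            rw [hsingle]
            simp
          · intro j1 h1 j2 h2 hf12
            by_contra hne
            simp only [Finset.coe_sdiff, Set.mem_diff, Finset.mem_coe] at h1 h2
            obtain ⟨hj1J, hj1A⟩ := h1
            obtain ⟨hj2J, -⟩ := h2
            exact hj1A (Finset.mem_filter.mpr
              ⟨hj1J, ⟨j2, Finset.mem_erase.mpr ⟨Ne.symm hne, hj2J⟩, hf12.symm⟩⟩)
        have hcards : J.card ≤ A.card + N f := by
          have := Finset.card_sdiff_add_card_eq_card hAsub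
          omega
        have hcR : (J.card : ℝ) ≤ (A.card : ℝ) + N f := by exact_mod_cast hcards
        have hNR : (N f : ℝ) ≤ k := by exact_mod_cast hfN
        linarith
      have hcoll : ∀ i ∈ J, ∑ f : Fin n → Fin m, ∑ j ∈ J.erase i, (if f i = f j then (1:ℝ) else 0)
          = ((J.card : ℝ) - 1) * (m:ℝ)^(n-1) := by
        intro i hi
        rw [Finset.sum_comm]
        rw [Finset.sum_congr rfl (fun j hj => exp_coll hn2 i j (Ne.symm (Finset.ne_of_mem_erase hj)))]
        rw [Finset.sum_const, nsmul_eq_mul, Finset.card_erase_of_mem hi]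
        congr 1
        push_cast [Nat.cast_sub (show 1 ≤ J.card by omega)]
        ring
      have hsum3 : ∑ f : Fin n → Fin m, C f
          = (J.card : ℝ) * ((J.card : ℝ) - 1) * (m:ℝ)^(n-1) := by
        rw [hC, Finset.sum_comm, Finset.sum_congr rfl hcoll, Finset.sum_const, nsmul_eq_mul]
        ring
      have hB : (bad.card : ℝ) * ((J.card:ℝ) - k)
          ≤ (J.card:ℝ)*((J.card:ℝ)-1)*(m:ℝ)^(n-1) := by
        calc (bad.card : ℝ) * ((J.card:ℝ) - k) = ∑ _f ∈ bad, ((J.card:ℝ) - k) := by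
              rw [Finset.sum_const, nsmul_eq_mul]
        _ ≤ ∑ f ∈ bad, C f := Finset.sum_le_sum hstep1
        _ ≤ ∑ f : Fin n → Fin m, C f :=
            Finset.sum_le_sum_of_subset_of_nonneg (Finset.subset_univ bad) (fun f _ _ => hCnonneg f)
        _ = _ := hsum3
      have harith : 10 * (J.card:ℝ) * ((J.card:ℝ) - 1) < ((J.card:ℝ) - k) * m := by
        have h1 : (k:ℝ) + 1 ≤ J.card := by exact_mod_cast hJ
        have h2 : (J.card:ℝ) ≤ 51 * k := by exact_mod_cast hcase
        have h3 : (101:ℝ) ≤ k := by exact_mod_cast hk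
        have hmR : (m:ℝ) = 100 * (k:ℝ)^2 := by rw [hm]; push_cast; ring
        rw [hmR]
        nlinarith [mul_nonneg (sub_nonneg.mpr h1) (sub_nonneg.mpr h3),
          mul_nonneg (sub_nonneg.mpr h2) (sub_nonneg.mpr h3),
          mul_nonneg (sub_nonneg.mpr h1) (sub_nonneg.mpr h2),
          sq_nonneg ((J.card:ℝ) - k), sq_nonneg ((k:ℝ))]
      have hMpos : (0:ℝ) < (m:ℝ)^(n-1) := by
        have : (0:ℝ) < m := by rw [hm]; positivity
        positivity
      have hpow : (m:ℝ)^n = (m:ℝ) * (m:ℝ)^(n-1) := by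
        rw [← pow_succ']
        congr 1
        omega
      have htk : (0:ℝ) < (J.card:ℝ) - k := by
        have : (k:ℝ) < J.card := by exact_mod_cast hJ
        linarith
      rw [hpow]
      have hfin : ((bad.card:ℝ) * 10) * ((J.card:ℝ) - k) < ((m:ℝ) * (m:ℝ)^(n-1)) * ((J.card:ℝ) - k) := by
        nlinarith [mul_lt_mul_of_pos_right harith hMpos, hB]
      exact lt_of_mul_lt_mul_right hfin htk.le
    · -- Case B: large J, Chebyshev argument
      have htn : J.card ≤ n := by
        have := Finset.card_le_univ J
        simpa using this
      set t := J.card with ht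
      have hk101 : (101:ℝ) ≤ k := by exact_mod_cast hk
      have hmR : (m:ℝ) = 100*(k:ℝ)^2 := by rw [hm]; push_cast; ring
      have hmpos : (0:ℝ) < m := by rw [hmR]; positivity
      have hm0 : (m:ℝ) ≠ 0 := ne_of_gt hmpos
      have hm4 : (4:ℝ) ≤ m := by nlinarith
      have htR : 51*(k:ℝ) + 1 ≤ t := by
        have : 51 * k + 1 ≤ t := by omega
        exact_mod_cast this
      set s : Fin m → (Fin n → Fin m) → ℝ :=
        fun c f => ∏ j ∈ J, (if f j = c then (-1:ℝ) else 1) with hs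
      set S : (Fin n → Fin m) → ℝ := fun f => ∑ c, s c f with hS
      obtain ⟨μ, hμ⟩ : ∃ μ : ℝ, μ = (m:ℝ) * (((m:ℝ)-2)/m)^t := ⟨_, rfl⟩
      -- pointwise S = m - 2N
      have hSN : ∀ f, S f = (m:ℝ) - 2 * N f := by
        intro f
        have h1 : ∀ c : Fin m, s c f
            = if Odd ((J.filter fun j => f j = c)).card then (-1:ℝ) else 1 := by
          intro c
          simp only [hs]
          rw [Finset.prod_ite, Finset.prod_const, Finset.prod_const, one_pow, mul_one]
          rcases Nat.even_or_odd ((J.filter fun j => f j = c)).card with he | ho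
          · rw [he.neg_one_pow, if_neg (by simpa using he)]
          · rw [ho.neg_one_pow, if_pos ho]
        have h2 : ∀ c : Fin m, (if Odd ((J.filter fun j => f j = c)).card then (-1:ℝ) else 1)
            = 1 - 2 * (if Odd ((J.filter fun j => f j = c)).card then (1:ℝ) else 0) := by
          intro c; split <;> ring
        simp only [hS]
        rw [Finset.sum_congr rfl (fun c _ => h1 c), Finset.sum_congr rfl (fun c _ => h2 c),
          Finset.sum_sub_distrib, Finset.sum_const, ← Finset.mul_sum, Finset.sum_boole]
        simp [hN, Finset.card_univ]
      -- expectation of s c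
      have hEs : ∀ c : Fin m, ∑ f : Fin n → Fin m, s c f = ((m:ℝ)-2)^t * (m:ℝ)^(n-t) := by
        intro c
        have hε : (∑ x : Fin m, if x = c then (-1:ℝ) else 1) = (m:ℝ) - 2 := by
          have h3 : ∀ x : Fin m, (if x = c then (-1:ℝ) else 1)
              = 1 - 2 * (if x = c then (1:ℝ) else 0) := by intro x; split <;> ring
          rw [Finset.sum_congr rfl (fun x _ => h3 x), Finset.sum_sub_distrib, Finset.sum_const,
            ← Finset.mul_sum]
          simp [Finset.sum_ite_eq', Finset.card_univ]
        simp only [hs]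
        rw [exp_prod J (fun x => if x = c then (-1:ℝ) else 1), hε]
      -- expectation of s c * s c'
      have hcross : ∀ c c' : Fin m, ∑ f : Fin n → Fin m, s c f * s c' f
          = (if c = c' then (m:ℝ) else ((m:ℝ)-4))^t * (m:ℝ)^(n-t) := by
        intro c c'
        have hpt : ∀ f : Fin n → Fin m, s c f * s c' f
            = ∏ j ∈ J, ((if f j = c then (-1:ℝ) else 1) * (if f j = c' then (-1:ℝ) else 1)) := by
          intro f; simp only [hs]; rw [Finset.prod_mul_distrib]
        simp_rw [hpt]
        rw [exp_prod J (fun x => (if x = c then (-1:ℝ) else 1) * (if x = c' then (-1:ℝ) else 1))]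
        congr 2
        by_cases hcc : c = c'
        · subst hcc
          rw [if_pos rfl]
          have h4 : ∀ x : Fin m, (if x = c then (-1:ℝ) else 1) * (if x = c then (-1:ℝ) else 1)
              = 1 := by intro x; split <;> norm_num
          rw [Finset.sum_congr rfl (fun x _ => h4 x), Finset.sum_const]
          simp [Finset.card_univ]
        · rw [if_neg hcc]
          have h4 : ∀ x : Fin m, (if x = c then (-1:ℝ) else 1) * (if x = c' then (-1:ℝ) else 1)
              = 1 - 2 * (if x = c then (1:ℝ) else 0) - 2 * (if x = c' then (1:ℝ) else 0) := by
            intro x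
            by_cases h1 : x = c
            · have h2 : ¬ x = c' := fun h => hcc (h1.symm.trans h)
              rw [if_pos h1, if_neg h2, if_pos h1, if_neg h2]; norm_num
            · by_cases h2 : x = c'
              · rw [if_neg h1, if_pos h2, if_neg h1, if_pos h2]; norm_num
              · rw [if_neg h1, if_neg h2, if_neg h1, if_neg h2]; norm_num
          rw [Finset.sum_congr rfl (fun x _ => h4 x), Finset.sum_sub_distrib, Finset.sum_sub_distrib,
            Finset.sum_const, ← Finset.mul_sum, ← Finset.mul_sum]
          simp [Finset.sum_ite_eq', Finset.card_univ]
          ring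
      -- first moment
      have hES : ∑ f : Fin n → Fin m, S f = (m:ℝ)^n * μ := by
        simp only [hS]
        rw [Finset.sum_comm]
        rw [Finset.sum_congr rfl (fun c _ => hEs c), Finset.sum_const]
        rw [Finset.card_univ, Fintype.card_fin, nsmul_eq_mul]
        rw [pow_sub₀ (m:ℝ) hm0 htn, hμ, div_pow]
        field_simp
      -- second moment
      have hES2 : ∑ f : Fin n → Fin m, (S f)^2
          = (m:ℝ)^n * ((m:ℝ) + (m:ℝ)*((m:ℝ)-1)*((((m:ℝ)-4)/m)^t)) := by
        have hsq : ∀ f, (S f)^2 = ∑ c : Fin m, ∑ c' : Fin m, s c f * s c' f := by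
          intro f
          simp only [hS]
          rw [sq, Finset.sum_mul_sum]
        simp_rw [hsq]
        rw [Finset.sum_comm]
        have hinner : ∀ c : Fin m, ∑ f : Fin n → Fin m, ∑ c' : Fin m, s c f * s c' f
            = ((m:ℝ)^t + ((m:ℝ)-1) * ((m:ℝ)-4)^t) * (m:ℝ)^(n-t) := by
          intro c
          rw [Finset.sum_comm]
          rw [Finset.sum_congr rfl (fun c' _ => hcross c c')]
          rw [← Finset.sum_mul]
          congr 1
          have h5 : ∀ c' : Fin m, (if c = c' then (m:ℝ) else ((m:ℝ)-4))^t
              = ((m:ℝ)-4)^t + (if c = c' then ((m:ℝ)^t - ((m:ℝ)-4)^t) else 0) := by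
            intro c'; split <;> ring
          rw [Finset.sum_congr rfl (fun c' _ => h5 c'), Finset.sum_add_distrib, Finset.sum_const,
            Finset.sum_ite_eq]
          simp [Finset.card_univ]
          ring
        rw [Finset.sum_congr rfl (fun c _ => hinner c), Finset.sum_const]
        rw [Finset.card_univ, Fintype.card_fin, nsmul_eq_mul]
        rw [pow_sub₀ (m:ℝ) hm0 htn, div_pow]
        field_simp
      -- variance bound
      have hVar : ∑ f : Fin n → Fin m, (S f - μ)^2 ≤ (m:ℝ)^n * m := by
        have hexp : ∀ f : Fin n → Fin m, (S f - μ)^2 = (S f)^2 - 2*μ*(S f) + μ^2 := by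
          intro f; ring
        rw [Finset.sum_congr rfl (fun f _ => hexp f), Finset.sum_add_distrib,
          Finset.sum_sub_distrib, ← Finset.mul_sum, Finset.sum_const, hES2, hES]
        rw [Finset.card_univ, Fintype.card_fun, Fintype.card_fin, Fintype.card_fin, nsmul_eq_mul]
        push_cast
        -- now: m^n*(m + m(m-1)ρ₂) - 2μ(m^n μ) + m^n μ² ≤ m^n m
        have hρ : (m:ℝ)*((m:ℝ)-1)*((((m:ℝ)-4)/m)^t) ≤ μ^2 := by
          have hbase : ((m:ℝ)-4)/m ≤ (((m:ℝ)-2)/m)^2 := by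
            rw [div_pow, div_le_div_iff₀ hmpos (by positivity)]
            nlinarith
          have hkey : ((((m:ℝ)-4)/m))^t ≤ ((((m:ℝ)-2)/m)^2)^t :=
            pow_le_pow_left₀ (div_nonneg (by linarith) hmpos.le) hbase t
          have hμsq : μ^2 = (m:ℝ)^2 * ((((m:ℝ)-2)/m)^2)^t := by
            rw [hμ, mul_pow, pow_right_comm]
          have h6 : (m:ℝ)*((m:ℝ)-1) ≤ (m:ℝ)^2 := by nlinarith
          have h7 : (0:ℝ) ≤ ((((m:ℝ)-2)/m)^2)^t := by positivity
          calc (m:ℝ)*((m:ℝ)-1)*((((m:ℝ)-4)/m)^t)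
              ≤ (m:ℝ)*((m:ℝ)-1) * ((((m:ℝ)-2)/m)^2)^t :=
                mul_le_mul_of_nonneg_left hkey (by nlinarith)
            _ ≤ (m:ℝ)^2 * ((((m:ℝ)-2)/m)^2)^t := mul_le_mul_of_nonneg_right h6 h7
            _ = μ^2 := hμsq.symm
        have hTpos : (0:ℝ) < (m:ℝ)^n := pow_pos hmpos n
        nlinarith [mul_le_mul_of_nonneg_left hρ (le_of_lt hTpos)]
      -- mean bound
      have hμ34 : μ ≤ (m:ℝ) - 34*k := by
        have hb : (1:ℝ) + t*(2/m) ≤ (1 + 2/m)^t := by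
          apply one_add_mul_le_pow
          have : (0:ℝ) ≤ 2/m := by positivity
          linarith
        have h0 : (0:ℝ) ≤ (((m:ℝ)-2)/m)^t := pow_nonneg (div_nonneg (by linarith) hmpos.le) t
        have hxy : (((m:ℝ)-2)/m)^t * ((1:ℝ)+2/m)^t ≤ 1 := by
          rw [← mul_pow]
          apply pow_le_one₀
          · exact mul_nonneg (div_nonneg (by linarith) hmpos.le) (by positivity)
          · rw [div_mul_eq_mul_div, div_le_one hmpos]
            have : ((m:ℝ)-2) * (1 + 2/m) = ((m:ℝ) - 2) + ((m:ℝ)-2)*(2/m) := by ring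
            rw [this]
            have h8 : ((m:ℝ)-2)*(2/m) ≤ 2 := by
              rw [mul_div_assoc']
              rw [div_le_iff₀ hmpos]
              nlinarith
            linarith
        have h5 : (((m:ℝ)-2)/m)^t * (1 + t*(2/m)) ≤ 1 :=
          le_trans (mul_le_mul_of_nonneg_left hb h0) hxy
        have hμm : μ * ((m:ℝ) + 2*t) ≤ (m:ℝ)^2 := by
          have heq : μ * ((m:ℝ) + 2*t)
              = (m:ℝ)^2 * ((((m:ℝ)-2)/m)^t * (1 + t*(2/m))) := by
            rw [hμ]; field_simp
          rw [heq]
          nlinarith [sq_nonneg (m:ℝ)]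
        have hgeo : (m:ℝ)^2 ≤ ((m:ℝ) - 34*k) * ((m:ℝ) + 2*t) := by
          have hk0 : (0:ℝ) < k := by linarith
          have hm34 : (0:ℝ) ≤ (m:ℝ) - 34*k := by nlinarith
          have h9 : (51*(k:ℝ)+1) * ((m:ℝ) - 34*k) ≤ (t:ℝ) * ((m:ℝ)-34*k) :=
            mul_le_mul_of_nonneg_right htR hm34
          nlinarith [h9, hk0, mul_pos hk0 hk0]
        have hpos : (0:ℝ) < (m:ℝ) + 2*t := by positivity
        exact le_of_mul_le_mul_right (hμm.trans hgeo) hpos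
      -- pointwise lower bound on bad
      have hlow : ∀ f ∈ bad, (32*(k:ℝ))^2 ≤ (S f - μ)^2 := by
        intro f hf
        have hfN : N f ≤ k := by
          have := (Finset.mem_filter.mp (hbad ▸ hf)).2
          omega
        have hNk : (N f : ℝ) ≤ k := by exact_mod_cast hfN
        have h1 : (m:ℝ) - 2*k ≤ S f := by rw [hSN f]; linarith
        have h2 : 32*(k:ℝ) ≤ S f - μ := by linarith
        nlinarith [hk101]
      -- chain
      have hchain : (bad.card : ℝ) * (32*(k:ℝ))^2 ≤ (m:ℝ)^n * m := by
        calc (bad.card : ℝ) * (32*(k:ℝ))^2 = ∑ _f ∈ bad, (32*(k:ℝ))^2 := by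
              rw [Finset.sum_const, nsmul_eq_mul]
        _ ≤ ∑ f ∈ bad, (S f - μ)^2 := Finset.sum_le_sum hlow
        _ ≤ ∑ f : Fin n → Fin m, (S f - μ)^2 :=
            Finset.sum_le_sum_of_subset_of_nonneg (Finset.subset_univ bad)
              (fun f _ _ => sq_nonneg _)
        _ ≤ (m:ℝ)^n * m := hVar
      -- finish
      have hTpos : (0:ℝ) < (m:ℝ)^n := pow_pos hmpos n
      have hk2 : (0:ℝ) < (k:ℝ)^2 := by positivity
      nlinarith [hchain, mul_pos hTpos hk2]
  have hsplit : good.card + bad.card = m ^ n := by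
    rw [← hTcard, hgood, hbad,
      Finset.card_filter_add_card_filter_not (s := univ) (p := fun π => k < N π),
      Finset.card_univ]
  have hgoodR : (good.card : ℝ) = (m:ℝ) ^ n - bad.card := by
    have := congrArg (fun x : ℕ => (x : ℝ)) hsplit
    push_cast at this
    linarith
  rw [hTcard]
  rw [lt_div_iff₀ (by push_cast; exact hTpos)]
  push_cast
  rw [hgoodR]
  linarith
end

section
/- Let n, k ≥ 1 with k ∣ n and n/k ≥ 2k. Given m : Fin k → Fin (2k), let x ⊆ Fin n be the set { i·(n/k) + (m i) : i ∈ Fin k } (one element in each of the k consecutive blocks of size n/k, at offset m i within block i). Fix i₀ ∈ Fin k and a bit position ℓ, and let y ⊆ Fin n be the set { i₀·(n/k) + j : j < 2k and the ℓ-th bit of the binary expansion of j equals 1 }. Then: (i) |x| = k; (ii) |x ∩ y| ≤ 1; and (iii) x ∩ y ≠ ∅ if and only if the ℓ-th bit of the binary expansion of m i₀ equals 1. -/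
open Finset

/-- The unique-intersection gadget for the one-way lower bound for `k`-disjointness:
with `x` containing one element per block (at offset `m i` in block `i`) and `y` supported
on block `i₀` at offsets `j < 2k` whose `ℓ`-th bit is `1`, we have `|x| = k`,
`|x ∩ y| ≤ 1`, and `x ∩ y ≠ ∅` iff the `ℓ`-th bit of `m i₀` is `1`. -/
theorem unique_disjointness_gadget (n k : ℕ) (hn : 1 ≤ n) (hk : 1 ≤ k)
    (hdvd : k ∣ n) (hblock : 2 * k ≤ n / k)
    (m : Fin k → Fin (2 * k)) (i₀ : Fin k) (ℓ : ℕ) :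
    let x : Finset (Fin n) :=
      univ.filter fun a : Fin n => ∃ i : Fin k, (a : ℕ) = (i : ℕ) * (n / k) + (m i : ℕ)
    let y : Finset (Fin n) :=
      univ.filter fun a : Fin n => ∃ j : Fin (2 * k),
        Nat.testBit (j : ℕ) ℓ = true ∧ (a : ℕ) = (i₀ : ℕ) * (n / k) + (j : ℕ)
    x.card = k ∧ (x ∩ y).card ≤ 1 ∧
      ((x ∩ y).Nonempty ↔ Nat.testBit ((m i₀ : ℕ)) ℓ = true) := by
  intro x y
  set b := n / k with hb
  have hbpos : 0 < b := lt_of_lt_of_le (by omega) hblock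
  have hkb : k * b = n := Nat.mul_div_cancel' hdvd
  -- any block element is < n
  have hlt : ∀ (i : Fin k) (r : ℕ), r < b → (i : ℕ) * b + r < n := by
    intro i r hr
    have : (i : ℕ) + 1 ≤ k := i.isLt
    calc (i : ℕ) * b + r < ((i : ℕ) + 1) * b := by nlinarith
    _ ≤ k * b := Nat.mul_le_mul_right b this
    _ = n := hkb
  have hmlt : ∀ i : Fin k, ((m i : ℕ)) < b := fun i => lt_of_lt_of_le (m i).isLt hblock
  -- uniqueness of block decomposition
  have hdec : ∀ (i i' : Fin k) (r r' : ℕ), r < b → r' < b →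
      (i : ℕ) * b + r = (i' : ℕ) * b + r' → i = i' ∧ r = r' := by
    intro i i' r r' hr hr' h
    have h1 : ((i : ℕ) * b + r) / b = (i : ℕ) := by
      rw [mul_comm, Nat.mul_add_div hbpos, Nat.div_eq_of_lt hr]; omega
    have h2 : ((i' : ℕ) * b + r') / b = (i' : ℕ) := by
      rw [mul_comm, Nat.mul_add_div hbpos, Nat.div_eq_of_lt hr']; omega
    have hii : (i : ℕ) = (i' : ℕ) := by rw [← h1, ← h2, h]
    refine ⟨Fin.ext hii, ?_⟩
    rw [hii] at h
    omega
  -- the map from Fin k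
  have hxcard : x.card = k := by
    have : x = (univ : Finset (Fin k)).image
        (fun i : Fin k => (⟨(i : ℕ) * b + (m i : ℕ), hlt i _ (hmlt i)⟩ : Fin n)) := by
      ext a
      simp only [x, mem_filter, mem_univ, true_and, mem_image]
      constructor
      · rintro ⟨i, hi⟩
        exact ⟨i, by ext; simp [hi, hb]⟩
      · rintro ⟨i, rfl⟩
        exact ⟨i, rfl⟩
    rw [this, card_image_of_injective _, card_univ, Fintype.card_fin]
    intro i i' h
    have := congrArg (fun a : Fin n => (a : ℕ)) h
    exact (hdec i i' _ _ (hmlt i) (hmlt i') this).1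
  refine ⟨hxcard, ?_, ?_⟩
  · -- x ∩ y ⊆ singleton
    refine card_le_one.2 ?_
    intro a ha a' ha'
    simp only [x, y, mem_inter, mem_filter, mem_univ, true_and] at ha ha'
    obtain ⟨⟨i, hi⟩, ⟨j, _, hj⟩⟩ := ha
    obtain ⟨⟨i', hi'⟩, ⟨j', _, hj'⟩⟩ := ha'
    have hjb : (j : ℕ) < b := lt_of_lt_of_le j.isLt hblock
    have hj'b : (j' : ℕ) < b := lt_of_lt_of_le j'.isLt hblock
    have h1 := hdec i i₀ _ _ (hmlt i) hjb (hi ▸ hj)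
    have h2 := hdec i' i₀ _ _ (hmlt i') hj'b (hi' ▸ hj')
    obtain ⟨rfl, h1'⟩ := h1
    obtain ⟨heq, h2'⟩ := h2
    ext
    rw [hi, hi', heq]
  · constructor
    · rintro ⟨a, ha⟩
      simp only [x, y, mem_inter, mem_filter, mem_univ, true_and] at ha
      obtain ⟨⟨i, hi⟩, ⟨j, hjt, hj⟩⟩ := ha
      have hjb : (j : ℕ) < b := lt_of_lt_of_le j.isLt hblock
      have h1 := hdec i i₀ _ _ (hmlt i) hjb (hi ▸ hj)
      obtain ⟨rfl, h2⟩ := h1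
      rw [h2]
      exact hjt
    · intro ht
      refine ⟨⟨(i₀ : ℕ) * b + (m i₀ : ℕ), hlt i₀ _ (hmlt i₀)⟩, ?_⟩
      simp only [x, y, mem_inter, mem_filter, mem_univ, true_and]
      exact ⟨⟨i₀, rfl⟩, ⟨m i₀, ht, rfl⟩⟩
end
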